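/- Let Ω ⊆ ℂ be open, f₁ : Ω → ℂ holomorphic with f₁' ≠ 0 on Ω, N := (2Re f₁/(1+|f₁|²), 2Im f₁/(1+|f₁|²), (|f₁|²−1)/(1+|f₁|²)), τ := log(2|f₁'|/(1+|f₁|²)), let ρ : Ω → ℝ be smooth with ρ > 0, and set X := e^{−2τ}(ρ_x N_x + ρ_y N_y) + ρ N. Then ⟨X, X⟩ = ρ² + e^{−2τ}(ρ_x² + ρ_y²) on Ω, and consequently at each point of Ω the middle-sphere relation ⟨X, X⟩ − ρ(e^{−2τ}Δ₀ρ + 2ρ) + 1 = 0 (i.e. ⟨X,X⟩ + (2H/K)⟨X,N⟩ + 1 = 0, using ⟨X,N⟩ = ρ and −2H/K = e^{−2τ}Δ₀ρ + 2ρ) holds if and only if ρ² + e^{−2τ} ρ Δ₀ρ = 1 + e^{−2τ}(ρ_x² + ρ_y²) at that point. -/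

import Mathlib

open scoped RealInnerProductSpace

/-- Partial derivative in the `x`-direction of a function on `ℂ ≅ ℝ²`. -/
noncomputable def pdx (u : ℂ → ℝ) (z : ℂ) : ℝ := fderiv ℝ u z 1

/-- Partial derivative in the `y`-direction of a function on `ℂ ≅ ℝ²`. -/
noncomputable def pdy (u : ℂ → ℝ) (z : ℂ) : ℝ := fderiv ℝ u z Complex.I

/-- Flat Laplacian `Δ₀u = u_xx + u_yy`. -/
noncomputable def lap (u : ℂ → ℝ) (z : ℂ) : ℝ := pdx (pdx u) z + pdy (pdy u) z

section MSRhelpers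

noncomputable def MSRg0 (f : ℂ → ℂ) (w : ℂ) : ℝ :=
  2 * (f w).re * (1 + ((f w).re * (f w).re + (f w).im * (f w).im))⁻¹
noncomputable def MSRg1 (f : ℂ → ℂ) (w : ℂ) : ℝ :=
  2 * (f w).im * (1 + ((f w).re * (f w).re + (f w).im * (f w).im))⁻¹
noncomputable def MSRg2 (f : ℂ → ℂ) (w : ℂ) : ℝ :=
  ((f w).re * (f w).re + (f w).im * (f w).im - 1) *
    (1 + ((f w).re * (f w).re + (f w).im * (f w).im))⁻¹

noncomputable def MSRgauss (f : ℂ → ℂ) (w : ℂ) : EuclideanSpace ℝ (Fin 3) :=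
  (WithLp.equiv 2 (Fin 3 → ℝ)).symm ![MSRg0 f w, MSRg1 f w, MSRg2 f w]

variable {f : ℂ → ℂ} {z d : ℂ}

lemma MSRhre (hf : HasDerivAt f d z) :
    HasFDerivAt (fun w => (f w).re)
      (Complex.reCLM.comp ((ContinuousLinearMap.smulRight (1 : ℂ →L[ℂ] ℂ) d).restrictScalars ℝ)) z :=
  Complex.reCLM.hasFDerivAt.comp z (hf.hasFDerivAt.restrictScalars ℝ)

lemma MSRhim (hf : HasDerivAt f d z) :
    HasFDerivAt (fun w => (f w).im)
      (Complex.imCLM.comp ((ContinuousLinearMap.smulRight (1 : ℂ →L[ℂ] ℂ) d).restrictScalars ℝ)) z :=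
  Complex.imCLM.hasFDerivAt.comp z (hf.hasFDerivAt.restrictScalars ℝ)

lemma MSRDpos : (0:ℝ) < 1 + ((f z).re * (f z).re + (f z).im * (f z).im) := by
  nlinarith [mul_self_nonneg (f z).re, mul_self_nonneg (f z).im]

/-- all six directional-derivative values of the Gauss map components. -/
lemma MSRderiv (hf : HasDerivAt f d z) :
    (fderiv ℝ (MSRg0 f) z 1 =
        2 * d.re * (1 + ((f z).re * (f z).re + (f z).im * (f z).im))⁻¹
        - 2 * (f z).re * (2 * (f z).re * d.re + 2 * (f z).im * d.im) *
          ((1 + ((f z).re * (f z).re + (f z).im * (f z).im))⁻¹ *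
           (1 + ((f z).re * (f z).re + (f z).im * (f z).im))⁻¹)) ∧
    (fderiv ℝ (MSRg1 f) z 1 =
        2 * d.im * (1 + ((f z).re * (f z).re + (f z).im * (f z).im))⁻¹
        - 2 * (f z).im * (2 * (f z).re * d.re + 2 * (f z).im * d.im) *
          ((1 + ((f z).re * (f z).re + (f z).im * (f z).im))⁻¹ *
           (1 + ((f z).re * (f z).re + (f z).im * (f z).im))⁻¹)) ∧
    (fderiv ℝ (MSRg2 f) z 1 =
        2 * (2 * (f z).re * d.re + 2 * (f z).im * d.im) *
          ((1 + ((f z).re * (f z).re + (f z).im * (f z).im))⁻¹ *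
           (1 + ((f z).re * (f z).re + (f z).im * (f z).im))⁻¹)) ∧
    (fderiv ℝ (MSRg0 f) z Complex.I =
        2 * (-d.im) * (1 + ((f z).re * (f z).re + (f z).im * (f z).im))⁻¹
        - 2 * (f z).re * (2 * (f z).re * (-d.im) + 2 * (f z).im * d.re) *
          ((1 + ((f z).re * (f z).re + (f z).im * (f z).im))⁻¹ *
           (1 + ((f z).re * (f z).re + (f z).im * (f z).im))⁻¹)) ∧
    (fderiv ℝ (MSRg1 f) z Complex.I =
        2 * d.re * (1 + ((f z).re * (f z).re + (f z).im * (f z).im))⁻¹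
        - 2 * (f z).im * (2 * (f z).re * (-d.im) + 2 * (f z).im * d.re) *
          ((1 + ((f z).re * (f z).re + (f z).im * (f z).im))⁻¹ *
           (1 + ((f z).re * (f z).re + (f z).im * (f z).im))⁻¹)) ∧
    (fderiv ℝ (MSRg2 f) z Complex.I =
        2 * (2 * (f z).re * (-d.im) + 2 * (f z).im * d.re) *
          ((1 + ((f z).re * (f z).re + (f z).im * (f z).im))⁻¹ *
           (1 + ((f z).re * (f z).re + (f z).im * (f z).im))⁻¹)) := by
  have hA := MSRhre hf
  have hB := MSRhim hf
  have hD : HasFDerivAt (fun w => 1 + ((f w).re * (f w).re + (f w).im * (f w).im)) _ z :=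
    ((hA.mul hA).add (hB.mul hB)).const_add 1
  have hDpos : (0:ℝ) < 1 + ((f z).re * (f z).re + (f z).im * (f z).im) := MSRDpos
  have hinv : HasFDerivAt (fun w => (1 + ((f w).re * (f w).re + (f w).im * (f w).im))⁻¹) _ z :=
    (hasDerivAt_inv hDpos.ne').comp_hasFDerivAt z hD
  have hg0 : HasFDerivAt (MSRg0 f) _ z := (hA.const_mul 2).mul hinv
  have hg1 : HasFDerivAt (MSRg1 f) _ z := (hB.const_mul 2).mul hinv
  have hg2 : HasFDerivAt (MSRg2 f) _ z := (((hA.mul hA).add (hB.mul hB)).sub_const 1).mul hinv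
  refine ⟨?_, ?_, ?_, ?_, ?_, ?_⟩ <;>
    [rw [hg0.fderiv]; rw [hg1.fderiv]; rw [hg2.fderiv]; rw [hg0.fderiv]; rw [hg1.fderiv];
      rw [hg2.fderiv]] <;>
    simp only [ContinuousLinearMap.smul_apply, ContinuousLinearMap.add_apply,
      ContinuousLinearMap.sub_apply, ContinuousLinearMap.comp_apply,
      ContinuousLinearMap.smulRight_apply, ContinuousLinearMap.one_apply,
      ContinuousLinearMap.coe_restrictScalars', Complex.reCLM_apply, Complex.imCLM_apply,
      smul_eq_mul, Complex.mul_re, Complex.mul_im, Complex.I_re, Complex.I_im, Complex.one_re, Complex.one_im,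
      neg_mul, one_mul, zero_mul, mul_zero, mul_one, zero_sub, sub_zero, neg_neg,
      Pi.add_apply, Pi.mul_apply] <;>
    field_simp <;> ring

lemma MSRdiff (hf : HasDerivAt f d z) : DifferentiableAt ℝ (MSRgauss f) z := by
  have hA := (MSRhre hf).differentiableAt
  have hB := (MSRhim hf).differentiableAt
  have hDpos : (0:ℝ) < 1 + ((f z).re * (f z).re + (f z).im * (f z).im) := MSRDpos
  have hinv : DifferentiableAt ℝ
      (fun w => (1 + ((f w).re * (f w).re + (f w).im * (f w).im))⁻¹) z :=
    (((hA.mul hA).add (hB.mul hB)).const_add 1).inv hDpos.ne'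
  have hg0 : DifferentiableAt ℝ (MSRg0 f) z := (hA.const_mul 2).mul hinv
  have hg1 : DifferentiableAt ℝ (MSRg1 f) z := (hB.const_mul 2).mul hinv
  have hg2 : DifferentiableAt ℝ (MSRg2 f) z :=
    (((hA.mul hA).add (hB.mul hB)).sub_const 1).mul hinv
  have hpi : DifferentiableAt ℝ (fun w => ![MSRg0 f w, MSRg1 f w, MSRg2 f w]) z := by
    rw [differentiableAt_pi]
    intro i
    fin_cases i
    · simpa using hg0
    · simpa using hg1
    · simpa using hg2
  exact ((PiLp.continuousLinearEquiv 2 ℝ (fun _ : Fin 3 => ℝ)).symm.differentiableAt).comp z hpi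

end MSRhelpers

set_option maxHeartbeats 4000000 in
/-- with `N`, `τ` coming from the holomorphic map `f₁`, `ρ > 0` smooth and
`X := e^{-2τ}(ρ_x N_x + ρ_y N_y) + ρN`, one has `⟨X,X⟩ = ρ² + e^{-2τ}(ρ_x² + ρ_y²)`
on `Ω`, and at each point the middle-sphere relation
`⟨X,X⟩ - ρ(e^{-2τ}Δ₀ρ + 2ρ) + 1 = 0` (i.e. `⟨X,X⟩ + (2H/K)⟨X,N⟩ + 1 = 0`) holds iff
`ρ² + e^{-2τ} ρ Δ₀ρ = 1 + e^{-2τ}(ρ_x² + ρ_y²)` holds there. -/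
theorem middle_sphere_relation_iff_ribaucour_equation
    (Ω : Set ℂ) (hΩ : IsOpen Ω) (f₁ : ℂ → ℂ)
    (hf₁ : DifferentiableOn ℂ f₁ Ω) (hf₁' : ∀ z ∈ Ω, deriv f₁ z ≠ 0)
    (N : ℂ → EuclideanSpace ℝ (Fin 3))
    (hN : ∀ z ∈ Ω,
      N z 0 = 2 * (f₁ z).re / (1 + ‖f₁ z‖ ^ 2) ∧
      N z 1 = 2 * (f₁ z).im / (1 + ‖f₁ z‖ ^ 2) ∧
      N z 2 = (‖f₁ z‖ ^ 2 - 1) / (1 + ‖f₁ z‖ ^ 2))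
    (τ : ℂ → ℝ)
    (hτ : ∀ z ∈ Ω, τ z =
      Real.log (2 * ‖deriv f₁ z‖ / (1 + ‖f₁ z‖ ^ 2)))
    (ρ : ℂ → ℝ) (hρ : ContDiffOn ℝ (⊤ : ℕ∞) ρ Ω) (hρpos : ∀ z ∈ Ω, 0 < ρ z)
    (X : ℂ → EuclideanSpace ℝ (Fin 3))
    (hX : ∀ z ∈ Ω, X z = Real.exp (-(2 * τ z)) •
        (pdx ρ z • fderiv ℝ N z 1 + pdy ρ z • fderiv ℝ N z Complex.I) + ρ z • N z) :
    ∀ z ∈ Ω,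
      ⟪X z, X z⟫ = ρ z ^ 2 + Real.exp (-(2 * τ z)) * (pdx ρ z ^ 2 + pdy ρ z ^ 2) ∧
      ((⟪X z, X z⟫ - ρ z * (Real.exp (-(2 * τ z)) * lap ρ z + 2 * ρ z) + 1 = 0) ↔
        (ρ z ^ 2 + Real.exp (-(2 * τ z)) * ρ z * lap ρ z
          = 1 + Real.exp (-(2 * τ z)) * (pdx ρ z ^ 2 + pdy ρ z ^ 2))) := by
  intro z hz
  have hzU : Ω ∈ nhds z := hΩ.mem_nhds hz
  have hfz : DifferentiableAt ℂ f₁ z := hf₁.differentiableAt hzU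
  have hder : HasDerivAt f₁ (deriv f₁ z) z := hfz.hasDerivAt
  have hd0 : deriv f₁ z ≠ 0 := hf₁' z hz
  have habs : ∀ w : ℂ, ‖f₁ w‖ ^ 2
      = (f₁ w).re * (f₁ w).re + (f₁ w).im * (f₁ w).im := fun w => by
    rw [Complex.sq_norm, Complex.normSq_apply]
  -- N agrees with the explicit Gauss map near z
  have heq : N =ᶠ[nhds z] MSRgauss f₁ := by
    filter_upwards [hzU] with w hw
    obtain ⟨h0, h1, h2⟩ := hN w hw
    ext i
    fin_cases i
    · exact h0.trans (by rw [habs w, div_eq_mul_inv]; rfl)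
    · exact h1.trans (by rw [habs w, div_eq_mul_inv]; rfl)
    · exact h2.trans (by rw [habs w, div_eq_mul_inv]; rfl)
  have hgd : DifferentiableAt ℝ (MSRgauss f₁) z := MSRdiff hder
  have hNfd : fderiv ℝ N z = fderiv ℝ (MSRgauss f₁) z := heq.fderiv_eq
  have hproj : ∀ (v : ℂ) (i : Fin 3), (fderiv ℝ (MSRgauss f₁) z v) i
      = fderiv ℝ (fun w => MSRgauss f₁ w i) z v := by
    intro v i
    have h := ((EuclideanSpace.proj i : EuclideanSpace ℝ (Fin 3) →L[ℝ] ℝ).hasFDerivAt.comp z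
      hgd.hasFDerivAt).fderiv
    have h2 : (fun w => MSRgauss f₁ w i) = (⇑(EuclideanSpace.proj i) ∘ MSRgauss f₁) := rfl
    rw [h2, h]; rfl
  obtain ⟨V1, V2, V3, V4, V5, V6⟩ := MSRderiv hder
  have c10 : (fderiv ℝ N z) 1 0 = fderiv ℝ (MSRg0 f₁) z 1 := by rw [hNfd]; exact hproj 1 0
  have c11 : (fderiv ℝ N z) 1 1 = fderiv ℝ (MSRg1 f₁) z 1 := by rw [hNfd]; exact hproj 1 1
  have c12 : (fderiv ℝ N z) 1 2 = fderiv ℝ (MSRg2 f₁) z 1 := by rw [hNfd]; exact hproj 1 2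
  have cI0 : (fderiv ℝ N z) Complex.I 0 = fderiv ℝ (MSRg0 f₁) z Complex.I := by
    rw [hNfd]; exact hproj Complex.I 0
  have cI1 : (fderiv ℝ N z) Complex.I 1 = fderiv ℝ (MSRg1 f₁) z Complex.I := by
    rw [hNfd]; exact hproj Complex.I 1
  have cI2 : (fderiv ℝ N z) Complex.I 2 = fderiv ℝ (MSRg2 f₁) z Complex.I := by
    rw [hNfd]; exact hproj Complex.I 2
  obtain ⟨k0, k1, k2⟩ := hN z hz
  rw [habs z, div_eq_mul_inv] at k0 k1 k2
  -- the conformal factor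
  have ht0 : 0 < ‖deriv f₁ z‖ := norm_pos_iff.mpr hd0
  have hd2pos : (0:ℝ) < (deriv f₁ z).re * (deriv f₁ z).re + (deriv f₁ z).im * (deriv f₁ z).im := by
    have := Complex.normSq_pos.mpr hd0
    rwa [Complex.normSq_apply] at this
  have hDpos : (0:ℝ) < 1 + ((f₁ z).re * (f₁ z).re + (f₁ z).im * (f₁ z).im) := MSRDpos
  have hexp : Real.exp (-(2 * τ z)) =
      ((1 + ((f₁ z).re * (f₁ z).re + (f₁ z).im * (f₁ z).im)) *
       (1 + ((f₁ z).re * (f₁ z).re + (f₁ z).im * (f₁ z).im))) /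
      (4 * ((deriv f₁ z).re * (deriv f₁ z).re + (deriv f₁ z).im * (deriv f₁ z).im)) := by
    rw [hτ z hz]
    set t := 2 * ‖deriv f₁ z‖ / (1 + ‖f₁ z‖ ^ 2) with htdef
    have hDpos' : (0:ℝ) < 1 + ‖f₁ z‖ ^ 2 := by positivity
    have ht : 0 < t := by rw [htdef]; positivity
    have h1 : Real.exp (-(2 * Real.log t)) = (t * t)⁻¹ := by
      rw [show -(2 * Real.log t) = Real.log ((t*t)⁻¹) by
        rw [Real.log_inv, Real.log_mul ht.ne' ht.ne']; ring]
      exact Real.exp_log (by positivity)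
    rw [h1, htdef, div_mul_div_comm, inv_div]
    rw [show (2 * ‖deriv f₁ z‖) * (2 * ‖deriv f₁ z‖)
        = 4 * ((deriv f₁ z).re * (deriv f₁ z).re + (deriv f₁ z).im * (deriv f₁ z).im) by
      have : ‖deriv f₁ z‖ ^ 2 = (deriv f₁ z).re * (deriv f₁ z).re
          + (deriv f₁ z).im * (deriv f₁ z).im := by
        rw [Complex.sq_norm, Complex.normSq_apply]
      nlinarith [this]]
    rw [habs z]
  have hDne : (1 + ((f₁ z).re * (f₁ z).re + (f₁ z).im * (f₁ z).im)) ≠ 0 := hDpos.ne'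
  have hSne : ((deriv f₁ z).re * (deriv f₁ z).re + (deriv f₁ z).im * (deriv f₁ z).im) ≠ 0 :=
    hd2pos.ne'
  have hu : (1 + ((f₁ z).re * (f₁ z).re + (f₁ z).im * (f₁ z).im)) * (1 + ((f₁ z).re * (f₁ z).re + (f₁ z).im * (f₁ z).im))⁻¹ = 1 := mul_inv_cancel₀ hDne
  have hs4 : (4 * ((deriv f₁ z).re * (deriv f₁ z).re + (deriv f₁ z).im * (deriv f₁ z).im)) * (4 * ((deriv f₁ z).re * (deriv f₁ z).re + (deriv f₁ z).im * (deriv f₁ z).im))⁻¹ = 1 := mul_inv_cancel₀ (by positivity)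
  have hxx : (fderiv ℝ N z) 1 0 * (fderiv ℝ N z) 1 0 + (fderiv ℝ N z) 1 1 * (fderiv ℝ N z) 1 1
      + (fderiv ℝ N z) 1 2 * (fderiv ℝ N z) 1 2
      = 4 * ((deriv f₁ z).re * (deriv f₁ z).re + (deriv f₁ z).im * (deriv f₁ z).im) *
        ((1 + ((f₁ z).re * (f₁ z).re + (f₁ z).im * (f₁ z).im))⁻¹ *
         (1 + ((f₁ z).re * (f₁ z).re + (f₁ z).im * (f₁ z).im))⁻¹) := by
    rw [c10, c11, c12, V1, V2, V3]
    linear_combination (4 * (2 * (f₁ z).re * (deriv f₁ z).re + 2 * (f₁ z).im * (deriv f₁ z).im) * (2 * (f₁ z).re * (deriv f₁ z).re + 2 * (f₁ z).im * (deriv f₁ z).im) * ((1 + ((f₁ z).re * (f₁ z).re + (f₁ z).im * (f₁ z).im))⁻¹ * (1 + ((f₁ z).re * (f₁ z).re + (f₁ z).im * (f₁ z).im))⁻¹ * (1 + ((f₁ z).re * (f₁ z).re + (f₁ z).im * (f₁ z).im))⁻¹)) * hu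
  have hyy : (fderiv ℝ N z) Complex.I 0 * (fderiv ℝ N z) Complex.I 0
      + (fderiv ℝ N z) Complex.I 1 * (fderiv ℝ N z) Complex.I 1
      + (fderiv ℝ N z) Complex.I 2 * (fderiv ℝ N z) Complex.I 2
      = 4 * ((deriv f₁ z).re * (deriv f₁ z).re + (deriv f₁ z).im * (deriv f₁ z).im) *
        ((1 + ((f₁ z).re * (f₁ z).re + (f₁ z).im * (f₁ z).im))⁻¹ *
         (1 + ((f₁ z).re * (f₁ z).re + (f₁ z).im * (f₁ z).im))⁻¹) := by
    rw [cI0, cI1, cI2, V4, V5, V6]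
    linear_combination (4 * (2 * (f₁ z).re * (-(deriv f₁ z).im) + 2 * (f₁ z).im * (deriv f₁ z).re) * (2 * (f₁ z).re * (-(deriv f₁ z).im) + 2 * (f₁ z).im * (deriv f₁ z).re) * ((1 + ((f₁ z).re * (f₁ z).re + (f₁ z).im * (f₁ z).im))⁻¹ * (1 + ((f₁ z).re * (f₁ z).re + (f₁ z).im * (f₁ z).im))⁻¹ * (1 + ((f₁ z).re * (f₁ z).re + (f₁ z).im * (f₁ z).im))⁻¹)) * hu
  have hxy : (fderiv ℝ N z) 1 0 * (fderiv ℝ N z) Complex.I 0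
      + (fderiv ℝ N z) 1 1 * (fderiv ℝ N z) Complex.I 1
      + (fderiv ℝ N z) 1 2 * (fderiv ℝ N z) Complex.I 2 = 0 := by
    rw [c10, c11, c12, cI0, cI1, cI2, V1, V2, V3, V4, V5, V6]
    linear_combination (4 * (2 * (f₁ z).re * (deriv f₁ z).re + 2 * (f₁ z).im * (deriv f₁ z).im) * (2 * (f₁ z).re * (-(deriv f₁ z).im) + 2 * (f₁ z).im * (deriv f₁ z).re) * ((1 + ((f₁ z).re * (f₁ z).re + (f₁ z).im * (f₁ z).im))⁻¹ * (1 + ((f₁ z).re * (f₁ z).re + (f₁ z).im * (f₁ z).im))⁻¹ * (1 + ((f₁ z).re * (f₁ z).re + (f₁ z).im * (f₁ z).im))⁻¹)) * hu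
  have hxn : (fderiv ℝ N z) 1 0 * N z 0 + (fderiv ℝ N z) 1 1 * N z 1
      + (fderiv ℝ N z) 1 2 * N z 2 = 0 := by
    rw [c10, c11, c12, V1, V2, V3, k0, k1, k2]
    linear_combination (-(2 * (2 * (f₁ z).re * (deriv f₁ z).re + 2 * (f₁ z).im * (deriv f₁ z).im)) * ((1 + ((f₁ z).re * (f₁ z).re + (f₁ z).im * (f₁ z).im))⁻¹ * (1 + ((f₁ z).re * (f₁ z).re + (f₁ z).im * (f₁ z).im))⁻¹)) * hu
  have hyn : (fderiv ℝ N z) Complex.I 0 * N z 0 + (fderiv ℝ N z) Complex.I 1 * N z 1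
      + (fderiv ℝ N z) Complex.I 2 * N z 2 = 0 := by
    rw [cI0, cI1, cI2, V4, V5, V6, k0, k1, k2]
    linear_combination (-(2 * (2 * (f₁ z).re * (-(deriv f₁ z).im) + 2 * (f₁ z).im * (deriv f₁ z).re)) * ((1 + ((f₁ z).re * (f₁ z).re + (f₁ z).im * (f₁ z).im))⁻¹ * (1 + ((f₁ z).re * (f₁ z).re + (f₁ z).im * (f₁ z).im))⁻¹)) * hu
  have hnn : N z 0 * N z 0 + N z 1 * N z 1 + N z 2 * N z 2 = 1 := by
    rw [k0, k1, k2]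
    linear_combination ((1 + ((f₁ z).re * (f₁ z).re + (f₁ z).im * (f₁ z).im)) * (1 + ((f₁ z).re * (f₁ z).re + (f₁ z).im * (f₁ z).im))⁻¹ + 1) * hu
  have hEA : Real.exp (-(2 * τ z)) *
      (4 * ((deriv f₁ z).re * (deriv f₁ z).re + (deriv f₁ z).im * (deriv f₁ z).im) *
        ((1 + ((f₁ z).re * (f₁ z).re + (f₁ z).im * (f₁ z).im))⁻¹ *
         (1 + ((f₁ z).re * (f₁ z).re + (f₁ z).im * (f₁ z).im))⁻¹)) = 1 := by
    rw [hexp]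
    linear_combination ((4 * ((deriv f₁ z).re * (deriv f₁ z).re + (deriv f₁ z).im * (deriv f₁ z).im)) * (4 * ((deriv f₁ z).re * (deriv f₁ z).re + (deriv f₁ z).im * (deriv f₁ z).im))⁻¹ * ((1 + ((f₁ z).re * (f₁ z).re + (f₁ z).im * (f₁ z).im)) * (1 + ((f₁ z).re * (f₁ z).re + (f₁ z).im * (f₁ z).im))⁻¹ + 1)) * hu + hs4
  have main : ⟪X z, X z⟫ = ρ z ^ 2 + Real.exp (-(2 * τ z)) * (pdx ρ z ^ 2 + pdy ρ z ^ 2) := by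
    rw [hX z hz]
    simp only [PiLp.inner_apply, RCLike.inner_apply, starRingEnd_apply, star_trivial,
      Fin.sum_univ_three, PiLp.add_apply, PiLp.smul_apply, smul_eq_mul]
    linear_combination (Real.exp (-(2 * τ z)) * pdx ρ z)^2 * hxx
      + (Real.exp (-(2 * τ z)) * pdy ρ z)^2 * hyy
      + 2 * (Real.exp (-(2 * τ z)) * pdx ρ z) * (Real.exp (-(2 * τ z)) * pdy ρ z) * hxy
      + 2 * (Real.exp (-(2 * τ z)) * pdx ρ z) * ρ z * hxn
      + 2 * (Real.exp (-(2 * τ z)) * pdy ρ z) * ρ z * hyn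
      + (ρ z * ρ z) * hnn
      + Real.exp (-(2 * τ z)) * (pdx ρ z ^ 2 + pdy ρ z ^ 2) * hEA
  refine ⟨main, ?_⟩
  rw [main]
  constructor <;> intro h <;> linear_combination -h
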